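/- Let Y be a discrete random variable and S a finite set of discrete random variables with Y ∉ S. Let E = { W ∈ S : Y is not conditionally independent of W given S \ {W} } be the set of essential variables for Y. Then E equals the intersection of all Markov boundaries of Y within S. -/
import Mathlib

open scoped BigOperators

noncomputable section

/-- `p` is a probability mass function on the finite type `Ω`. -/
def IsDist {Ω : Type*} [Fintype Ω] (p : Ω → ℝ) : Prop :=
  (∀ w, 0 ≤ p w) ∧ ∑ w, p w = 1

/-- Total variation distance between two distributions on the same finite type. -/
def tvDist {Ω : Type*} [Fintype Ω] (p q : Ω → ℝ) : ℝ :=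
  (∑ w, |p w - q w|) / 2

variable {ι : Type*} [Fintype ι] [DecidableEq ι]
variable {α : ι → Type*} [∀ i, Fintype (α i)] [∀ i, DecidableEq (α i)]

/-- Marginal probability, under joint pmf `p`, of the event that the variables in the
collection `A` take the values prescribed by the configuration `x`. -/
def margProb (p : (∀ i, α i) → ℝ) (A : Finset ι) (x : ∀ i, α i) : ℝ :=
  ∑ w : ∀ i, α i, if ∀ i ∈ A, w i = x i then p w else 0

/-- Conditional independence of the collections `A` and `B` given the collection `C`:
`f(a, b | c) = f(a | c) f(b | c)` whenever `f(c) > 0` (stated in multiplied-out form). -/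
def CondIndep (p : (∀ i, α i) → ℝ) (A B C : Finset ι) : Prop :=
  ∀ x : ∀ i, α i, 0 < margProb p C x →
    margProb p (A ∪ B ∪ C) x * margProb p C x =
      margProb p (A ∪ C) x * margProb p (B ∪ C) x

/-- `M` is a Markov blanket of the variable `y` within the collection `T`. -/
def MarkovBlanket (p : (∀ i, α i) → ℝ) (y : ι) (T M : Finset ι) : Prop :=
  M ⊆ T ∧ CondIndep p {y} (T \ M) M

/-- `M` is a Markov boundary of `y` within `T`: a Markov blanket no proper subset of
which is a Markov blanket. -/
def MarkovBoundary (p : (∀ i, α i) → ℝ) (y : ι) (T M : Finset ι) : Prop :=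
  MarkovBlanket p y T M ∧ ∀ M' ⊂ M, ¬ MarkovBlanket p y T M'

/-- Mutual information between the collections `A` and `B`
(with the convention `0 · log(junk) = 0` on zero-probability terms). -/
def MI (p : (∀ i, α i) → ℝ) (A B : Finset ι) : ℝ :=
  ∑ w : ∀ i, α i, p w *
    Real.log (margProb p (A ∪ B) w / (margProb p A w * margProb p B w))

/-- Conditional mutual information between collections `A` and `B` given `C`
(with the convention `0 · log(junk) = 0` on zero-probability terms). -/
def CMI (p : (∀ i, α i) → ℝ) (A B C : Finset ι) : ℝ :=
  ∑ w : (∀ i, α i), p w *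
    Real.log ((margProb p (A ∪ B ∪ C) w * margProb p C w) /
      (margProb p (A ∪ C) w * margProb p (B ∪ C) w))

/- ### Auxiliary lemmas -/

lemma margProb_congr (p : (∀ i, α i) → ℝ) (U : Finset ι) {x x' : ∀ i, α i}
    (h : ∀ i ∈ U, x i = x' i) : margProb p U x = margProb p U x' := by
  unfold margProb
  refine Finset.sum_congr rfl fun w _ => ?_
  congr 1
  simp only [eq_iff_iff]
  constructor <;> intro hh i hi
  · rw [← h i hi]; exact hh i hi
  · rw [h i hi]; exact hh i hi

lemma margProb_mono (p : (∀ i, α i) → ℝ) (hp0 : ∀ w, 0 ≤ p w) {U V : Finset ι}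
    (h : U ⊆ V) (x : ∀ i, α i) : margProb p V x ≤ margProb p U x := by
  refine Finset.sum_le_sum fun w _ => ?_
  by_cases hV : ∀ i ∈ V, w i = x i
  · rw [if_pos hV, if_pos fun i hi => hV i (h hi)]
  · rw [if_neg hV]
    by_cases hU : ∀ i ∈ U, w i = x i
    · rw [if_pos hU]; exact hp0 w
    · rw [if_neg hU]

lemma margProb_sum (p : (∀ i, α i) → ℝ) (U B : Finset ι) (hUB : Disjoint U B)
    (x : ∀ i, α i) :
    margProb p U x = ∑ v : (∀ i : {i // i ∈ B}, α i.1),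
      margProb p (U ∪ B) (fun i => if h : i ∈ B then v ⟨i, h⟩ else x i) := by
  unfold margProb
  rw [Finset.sum_comm]
  refine Finset.sum_congr rfl fun w _ => ?_
  symm
  by_cases hU : ∀ i ∈ U, w i = x i
  · rw [if_pos hU]
    have : ∀ v : (∀ i : {i // i ∈ B}, α i.1),
        (if ∀ i ∈ U ∪ B, w i = (fun j => if h : j ∈ B then v ⟨j, h⟩ else x j) i then p w else 0)
        = if v = (fun i : {i // i ∈ B} => w i.1) then p w else 0 := by
      intro v
      congr 1
      simp only [eq_iff_iff]
      constructor
      · intro hh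
        funext i
        have := hh i.1 (Finset.mem_union_right _ i.2)
        simp only [i.2, dif_pos] at this
        exact this.symm
      · rintro rfl i hi
        rcases Finset.mem_union.1 hi with h1 | h1
        · have : i ∉ B := Finset.disjoint_left.1 hUB h1
          simp only [this, dif_neg, not_false_iff]
          exact hU i h1
        · simp only [h1, dif_pos]
    calc (∑ v : (∀ i : {i // i ∈ B}, α i.1),
        if ∀ i ∈ U ∪ B, w i = (fun j => if h : j ∈ B then v ⟨j, h⟩ else x j) i then p w else 0)
        = ∑ v : (∀ i : {i // i ∈ B}, α i.1),
            if v = (fun i : {i // i ∈ B} => w i.1) then p w else 0 :=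
          Finset.sum_congr rfl fun v _ => this v
      _ = p w := by simp
  · rw [if_neg hU]
    refine (Finset.sum_eq_zero fun v _ => ?_)
    rw [if_neg]
    intro hh
    exact hU fun i hi => by
      have := hh i (Finset.mem_union_left _ hi)
      have hiB : i ∉ B := Finset.disjoint_left.1 hUB hi
      simpa [hiB] using this

/-- Decomposition: `A ⊥ (B ∪ D) | C` implies `A ⊥ D | C`. -/
lemma condIndep_decomp (p : (∀ i, α i) → ℝ) (A B C D : Finset ι)
    (hB : Disjoint B (A ∪ C ∪ D)) (h : CondIndep p A (B ∪ D) C) : CondIndep p A D C := by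
  intro x hx
  have hBA : Disjoint B A := hB.mono_right (Finset.subset_union_left.trans Finset.subset_union_left)
  have hBC : Disjoint B C := hB.mono_right (by intro i hi; exact Finset.mem_union_left _ (Finset.mem_union_right _ hi))
  have hBD : Disjoint B D := hB.mono_right Finset.subset_union_right
  have hADC : Disjoint (A ∪ D ∪ C) B := by
    rw [disjoint_comm]
    exact Finset.disjoint_union_right.2 ⟨Finset.disjoint_union_right.2 ⟨hBA, hBD⟩, hBC⟩
  have hDC : Disjoint (D ∪ C) B := hADC.mono_left (by
    intro i hi
    rcases Finset.mem_union.1 hi with h1 | h1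
    · exact Finset.mem_union_left _ (Finset.mem_union_right _ h1)
    · exact Finset.mem_union_right _ h1)
  rw [margProb_sum p (A ∪ D ∪ C) B hADC x, margProb_sum p (D ∪ C) B hDC x,
    Finset.sum_mul, Finset.mul_sum]
  refine Finset.sum_congr rfl fun v _ => ?_
  set x' : ∀ i, α i := fun i => if h : i ∈ B then v ⟨i, h⟩ else x i with hx'
  have hagree : ∀ i, i ∉ B → x' i = x i := by
    intro i hi; simp [hx', hi]
  have hCeq : margProb p C x' = margProb p C x :=
    margProb_congr p C fun i hi => (hagree i (Finset.disjoint_right.1 hBC hi)).symm ▸ rfl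
  have hACeq : margProb p (A ∪ C) x' = margProb p (A ∪ C) x := by
    refine margProb_congr p (A ∪ C) fun i hi => ?_
    rcases Finset.mem_union.1 hi with h1 | h1
    · exact hagree i (Finset.disjoint_right.1 hBA h1)
    · exact hagree i (Finset.disjoint_right.1 hBC h1)
  have hx'pos : 0 < margProb p C x' := by rw [hCeq]; exact hx
  have key := h x' hx'pos
  rw [hCeq, hACeq] at key
  have hset1 : A ∪ D ∪ C ∪ B = A ∪ (B ∪ D) ∪ C := by
    ext i
    simp only [Finset.mem_union]
    tauto
  have hset2 : D ∪ C ∪ B = B ∪ D ∪ C := by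
    ext i
    simp only [Finset.mem_union]
    tauto
  rw [hset1, hset2]
  exact key

/-- Weak union: `A ⊥ (B ∪ D) | C` implies `A ⊥ B | (C ∪ D)`. -/
lemma condIndep_weakUnion (p : (∀ i, α i) → ℝ) (hp0 : ∀ w, 0 ≤ p w) (A B C D : Finset ι)
    (hB : Disjoint B (A ∪ C ∪ D)) (h : CondIndep p A (B ∪ D) C) :
    CondIndep p A B (C ∪ D) := by
  intro x hx
  have hC : 0 < margProb p C x :=
    lt_of_lt_of_le hx (margProb_mono p hp0 Finset.subset_union_left x)
  have h1 := h x hC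
  have h2 := condIndep_decomp p A B C D hB h x hC
  have hCne : margProb p C x ≠ 0 := ne_of_gt hC
  apply mul_right_cancel₀ hCne
  have e1 : A ∪ B ∪ (C ∪ D) = A ∪ (B ∪ D) ∪ C := by
    ext i; simp only [Finset.mem_union]; tauto
  have e2 : A ∪ (C ∪ D) = A ∪ D ∪ C := by
    ext i; simp only [Finset.mem_union]; tauto
  have e3 : B ∪ (C ∪ D) = B ∪ D ∪ C := by
    ext i; simp only [Finset.mem_union]; tauto
  have e4 : C ∪ D = D ∪ C := Finset.union_comm _ _
  rw [e1, e2, e3, e4]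
  linear_combination margProb p (D ∪ C) x * h1 - margProb p (B ∪ D ∪ C) x * h2

/-- Every Markov blanket contains a Markov boundary. -/
lemma exists_boundary_subset (p : (∀ i, α i) → ℝ) (y : ι) (S : Finset ι) :
    ∀ M0 : Finset ι, MarkovBlanket p y S M0 → ∃ M, M ⊆ M0 ∧ MarkovBoundary p y S M := by
  intro M0
  induction M0 using Finset.strongInduction with
  | _ M0 ih =>
    intro h
    by_cases hmin : ∀ M' ⊂ M0, ¬ MarkovBlanket p y S M'
    · exact ⟨M0, subset_rfl, h, hmin⟩
    · push_neg at hmin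
      obtain ⟨M', hM's, hM'⟩ := hmin
      obtain ⟨M, hM1, hM2⟩ := ih M' hM's hM'
      exact ⟨M, hM1.trans hM's.subset, hM2⟩

/-- `S` itself is a Markov blanket of `y` within `S`. -/
lemma blanket_self (p : (∀ i, α i) → ℝ) (y : ι) (S : Finset ι) :
    MarkovBlanket p y S S := by
  refine ⟨subset_rfl, fun x hx => ?_⟩
  have : S \ S = (∅ : Finset ι) := Finset.sdiff_self S
  rw [this]
  simp

variable [∀ i, Nonempty (α i)]

/-- Lemma 5: the set `E` of essential variables for `Y` (those `W ∈ S`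
with `Y` not conditionally independent of `W` given `S \ {W}`) equals the intersection
of all Markov boundaries of `Y` within `S`. -/
theorem essential_variables_eq_inter_markov_boundaries
    (p : (∀ i, α i) → ℝ) (hp : IsDist p)
    (y : ι) (S : Finset ι) (hyS : y ∉ S)
    (E : Finset ι)
    (hE : ∀ W, W ∈ E ↔ W ∈ S ∧ ¬ CondIndep p {y} {W} (S.erase W)) :
    (E : Set ι) = ⋂ M ∈ {M : Finset ι | MarkovBoundary p y S M}, (M : Set ι) := by
  ext W
  simp only [Finset.coe_sort_coe, Set.mem_iInter, Set.mem_setOf_eq, Finset.mem_coe]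
  constructor
  · -- essential variables belong to every Markov boundary
    intro hW M hM
    obtain ⟨hWS, hWni⟩ := (hE W).1 hW
    by_contra hWM
    obtain ⟨⟨hMS, hMci⟩, _⟩ := hM
    -- weak union: Y ⊥ S\M | M  ⟹  Y ⊥ {W} | S.erase W
    have hWSM : W ∈ S \ M := Finset.mem_sdiff.2 ⟨hWS, hWM⟩
    have hBD : ({W} : Finset ι) ∪ (S \ M).erase W = S \ M := by
      ext i
      simp only [Finset.mem_union, Finset.mem_singleton, Finset.mem_erase, Finset.mem_sdiff]
      constructor
      · rintro (rfl | ⟨_, h⟩)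
        · exact Finset.mem_sdiff.1 hWSM
        · exact h
      · intro hi
        by_cases hiW : i = W
        · exact Or.inl hiW
        · exact Or.inr ⟨hiW, hi⟩
    have hdisj : Disjoint ({W} : Finset ι) ({y} ∪ M ∪ (S \ M).erase W) := by
      simp only [Finset.disjoint_left, Finset.mem_singleton]
      rintro a rfl ha
      rcases Finset.mem_union.1 ha with h1 | h1
      · rcases Finset.mem_union.1 h1 with h2 | h2
        · exact hyS (Finset.mem_singleton.1 h2 ▸ hWS)
        · exact hWM h2
      · exact (Finset.mem_erase.1 h1).1 rfl
    have hci' : CondIndep p {y} ({W} ∪ (S \ M).erase W) M := by rw [hBD]; exact hMci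
    have := condIndep_weakUnion p hp.1 {y} {W} M ((S \ M).erase W) hdisj hci'
    have hset : M ∪ (S \ M).erase W = S.erase W := by
      ext i
      simp only [Finset.mem_union, Finset.mem_erase, Finset.mem_sdiff]
      constructor
      · rintro (h1 | ⟨h1, h2, h3⟩)
        · exact ⟨fun hiW => hWM (hiW ▸ h1), hMS h1⟩
        · exact ⟨h1, h2⟩
      · rintro ⟨h1, h2⟩
        by_cases hiM : i ∈ M
        · exact Or.inl hiM
        · exact Or.inr ⟨h1, h2, hiM⟩
    rw [hset] at this
    exact hWni this
  · -- a variable lying in every boundary is essential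
    intro hW
    by_contra hWE
    rw [hE W] at hWE
    push_neg at hWE
    by_cases hWS : W ∈ S
    · have hci := hWE hWS
      -- S.erase W is a Markov blanket
      have hbl : MarkovBlanket p y S (S.erase W) := by
        refine ⟨Finset.erase_subset _ _, ?_⟩
        have : S \ S.erase W = {W} := by
          ext i
          simp only [Finset.mem_sdiff, Finset.mem_erase, Finset.mem_singleton, not_and]
          constructor
          · rintro ⟨h1, h2⟩
            by_contra hne
            exact (h2 (fun h => hne h) h1).elim
          · rintro rfl
            exact ⟨hWS, fun h _ => (h rfl).elim⟩
        rw [this]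
        exact hci
      obtain ⟨M, hMsub, hMbd⟩ := exists_boundary_subset p y S _ hbl
      have : W ∈ M := hW M hMbd
      exact (Finset.mem_erase.1 (hMsub this)).1 rfl
    · obtain ⟨M, hMsub, hMbd⟩ := exists_boundary_subset p y S S (blanket_self p y S)
      exact hWS (hMbd.1.1 (hW M hMbd))

end
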